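/- Let r, h > 0 with 2h < r · tanh(1), and define A(s) = 4π ∫₀^h (r cosh(sz)/cosh(sh)) · √(1 + (r s sinh(sz)/cosh(sh))²) dz for s ≥ 0. Suppose s₂ > 0 satisfies r s₂ = cosh(s₂ h) and s ≤ s₂ for every s > 0 with r s = cosh(s h). Then A(s) ≤ A(s₂) for every s ≥ 0; that is, the unstable catenoid has largest area among all surfaces in the family {C_s^{r,h}}_{s ≥ 0}. -/

import Mathlib

open Real Set


private noncomputable def Gfun (x : ℝ) : ℝ := x * Real.sqrt (1 + x ^ 2) + Real.arsinh x

private lemma sqrt1x_pos (x : ℝ) : 0 < Real.sqrt (1 + x ^ 2) :=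
  Real.sqrt_pos.mpr (by positivity)

private lemma hasDerivAt_W (x : ℝ) :
    HasDerivAt (fun y : ℝ => y * Real.sqrt (1 + y ^ 2))
      ((1 + 2 * x ^ 2) / Real.sqrt (1 + x ^ 2)) x := by
  have h1 : HasDerivAt (fun y : ℝ => 1 + y ^ 2) (2 * x) x := by
    simpa using ((hasDerivAt_pow 2 x).const_add 1)
  have h2 : HasDerivAt (fun y : ℝ => Real.sqrt (1 + y ^ 2))
      (2 * x / (2 * Real.sqrt (1 + x ^ 2))) x :=
    by
    have h := (Real.hasDerivAt_sqrt (show (1:ℝ) + x^2 ≠ 0 by positivity)).comp x h1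
    refine HasDerivAt.congr_deriv h ?_
    ring
  have h3 := (hasDerivAt_id x).mul h2
  refine HasDerivAt.congr_deriv h3 ?_
  simp only [id]
  have hs := sqrt1x_pos x
  have hsq : Real.sqrt (1 + x ^ 2) ^ 2 = 1 + x ^ 2 := Real.sq_sqrt (by positivity)
  field_simp
  nlinarith [hsq]

private lemma hasDerivAt_G (x : ℝ) :
    HasDerivAt Gfun (2 * Real.sqrt (1 + x ^ 2)) x := by
  have h := (hasDerivAt_W x).add (Real.hasDerivAt_arsinh x)
  refine HasDerivAt.congr_deriv h ?_
  have hs := sqrt1x_pos x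
  have hsq : Real.sqrt (1 + x ^ 2) ^ 2 = 1 + x ^ 2 := Real.sq_sqrt (by positivity)
  field_simp
  nlinarith [hsq]

private lemma G_le (x : ℝ) (hx : 0 ≤ x) : Gfun x ≤ 2 * x + x ^ 3 / 3 := by
  have key : MonotoneOn (fun y : ℝ => 2 * y + y ^ 3 / 3 - Gfun y) (Ici 0) := by
    have hd : ∀ y : ℝ, HasDerivAt (fun y : ℝ => 2 * y + y ^ 3 / 3 - Gfun y)
        (2 + y ^ 2 - 2 * Real.sqrt (1 + y ^ 2)) y := by
      intro y
      have h1 : HasDerivAt (fun y : ℝ => 2 * y + y ^ 3 / 3) (2 + y ^ 2) y := by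
        have := ((hasDerivAt_pow 3 y).div_const 3).const_add 0
        have h2 := ((hasDerivAt_id y).const_mul 2).add ((hasDerivAt_pow 3 y).div_const 3)
        refine HasDerivAt.congr_deriv h2 ?_; ring
      exact h1.sub (hasDerivAt_G y)
    apply monotoneOn_of_deriv_nonneg (convex_Ici 0)
    · exact fun y _ => (hd y).continuousAt.continuousWithinAt
    · exact fun y _ => ((hd y).differentiableAt).differentiableWithinAt
    · intro y _
      rw [(hd y).deriv]
      have h1 : Real.sqrt (1 + y ^ 2) ≤ 1 + y ^ 2 / 2 := by
        rw [show (1 : ℝ) + y ^ 2 / 2 = Real.sqrt ((1 + y ^ 2 / 2) ^ 2) by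
          rw [Real.sqrt_sq (by positivity)]]
        exact Real.sqrt_le_sqrt (by nlinarith)
      nlinarith
  have h0 : (0:ℝ) ∈ Ici (0:ℝ) := self_mem_Ici
  have := key h0 (show x ∈ Ici (0:ℝ) from hx) hx
  simp only [Gfun, Real.arsinh_zero] at this
  simp only [Gfun]
  nlinarith [this]

private lemma hasDerivAt_phi (a b : ℝ) (hb : 0 < b) (x : ℝ) :
    HasDerivAt (fun y : ℝ => a * y * Real.sqrt (1 + (b * y) ^ 2) - Real.arsinh (b * y))
      ((a - b + 2 * a * b ^ 2 * x ^ 2) / Real.sqrt (1 + (b * x) ^ 2)) x := by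
  have hbx : HasDerivAt (fun y : ℝ => b * y) b x := by
    simpa using (hasDerivAt_id x).const_mul b
  have h1 : HasDerivAt (fun y : ℝ => (b * y) * Real.sqrt (1 + (b * y) ^ 2))
      ((1 + 2 * (b * x) ^ 2) / Real.sqrt (1 + (b * x) ^ 2) * b) x :=
    (hasDerivAt_W (b * x)).comp x hbx
  have h2 : HasDerivAt (fun y : ℝ => Real.arsinh (b * y))
      ((Real.sqrt (1 + (b * x) ^ 2))⁻¹ * b) x :=
    (Real.hasDerivAt_arsinh (b * x)).comp x hbx
  have h3 := (h1.const_mul (a / b)).sub h2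
  have hfun : (fun y : ℝ => a / b * ((b * y) * Real.sqrt (1 + (b * y) ^ 2))
      - Real.arsinh (b * y))
      = fun y : ℝ => a * y * Real.sqrt (1 + (b * y) ^ 2) - Real.arsinh (b * y) := by
    ext y
    field_simp
  simp only [Pi.sub_def] at h3
  rw [hfun] at h3
  refine HasDerivAt.congr_deriv h3 ?_
  have hs := sqrt1x_pos (b * x)
  field_simp
  ring
section PhiSign

private lemma phi_sign (a b c : ℝ) (ha : 0 < a) (hb : 0 < b) (hab : a < b) (hc : 0 < c)
    (hzero : a * c * Real.sqrt (1 + (b * c) ^ 2) = Real.arsinh (b * c)) :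
    ∀ x : ℝ, 0 < x →
      (x ≤ c → a * x * Real.sqrt (1 + (b * x) ^ 2) ≤ Real.arsinh (b * x)) ∧
      (c ≤ x → Real.arsinh (b * x) ≤ a * x * Real.sqrt (1 + (b * x) ^ 2)) := by
  set φ : ℝ → ℝ := fun y => a * y * Real.sqrt (1 + (b * y) ^ 2) - Real.arsinh (b * y) with hφ
  set x₀ : ℝ := Real.sqrt ((b - a) / (2 * a * b ^ 2)) with hx₀
  have hx₀nn : 0 ≤ x₀ := Real.sqrt_nonneg _
  have hx₀sq : x₀ ^ 2 = (b - a) / (2 * a * b ^ 2) :=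
    Real.sq_sqrt (div_nonneg (by linarith) (by positivity))
  have hx₀sq' : 2 * a * b ^ 2 * x₀ ^ 2 = b - a := by
    rw [hx₀sq]; field_simp
  have hcont : ∀ s : Set ℝ, ContinuousOn φ s :=
    fun s y _ => (hasDerivAt_phi a b hb y).continuousAt.continuousWithinAt
  have hanti : StrictAntiOn φ (Icc 0 x₀) := by
    apply strictAntiOn_of_deriv_neg (convex_Icc 0 x₀) (hcont _)
    intro y hy
    rw [interior_Icc] at hy
    rw [(hasDerivAt_phi a b hb y).deriv]
    apply div_neg_of_neg_of_pos _ (sqrt1x_pos _)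
    have h1 : y ^ 2 < x₀ ^ 2 := by nlinarith [hy.1, hy.2]
    nlinarith [hx₀sq', mul_lt_mul_of_pos_left h1 (show (0:ℝ) < 2 * a * b ^ 2 by positivity)]
  have hmono : StrictMonoOn φ (Ici x₀) := by
    apply strictMonoOn_of_deriv_pos (convex_Ici x₀) (hcont _)
    intro y hy
    rw [interior_Ici] at hy
    rw [(hasDerivAt_phi a b hb y).deriv]
    apply div_pos _ (sqrt1x_pos _)
    have h1 : x₀ ^ 2 < y ^ 2 := by nlinarith [mem_Ioi.mp hy, hx₀nn]
    nlinarith [hx₀sq', mul_lt_mul_of_pos_left h1 (show (0:ℝ) < 2 * a * b ^ 2 by positivity)]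
  have hφ0 : φ 0 = 0 := by simp [hφ, Real.arsinh_zero]
  have hφc : φ c = 0 := by simp [hφ, hzero]
  have hx₀c : x₀ < c := by
    by_contra hcon
    push_neg at hcon
    have := hanti (left_mem_Icc.mpr hx₀nn) ⟨hc.le, hcon⟩ hc
    rw [hφ0, hφc] at this
    exact lt_irrefl 0 this
  intro x hx
  constructor
  · intro hxc
    have hxle : φ x ≤ 0 := by
      rcases le_or_gt x x₀ with hcase | hcase
      · have := hanti (left_mem_Icc.mpr hx₀nn) ⟨hx.le, hcase⟩ hx
        rw [hφ0] at this
        exact this.le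
      · have := hmono.monotoneOn (mem_Ici.mpr hcase.le) (mem_Ici.mpr hx₀c.le) hxc
        rw [hφc] at this
        exact this
    simpa [hφ, sub_nonpos] using hxle
  · intro hcx
    have := hmono.monotoneOn (mem_Ici.mpr hx₀c.le) (mem_Ici.mpr (hx₀c.le.trans hcx)) hcx
    rw [hφc] at this
    simpa [hφ, sub_nonneg] using this

end PhiSign

private lemma closed_form (r h s : ℝ) (hs : s ≠ 0) :
    (∫ z in (0:ℝ)..h, (r * Real.cosh (s * z) / Real.cosh (s * h)) *
        Real.sqrt (1 + (r * s * Real.sinh (s * z) / Real.cosh (s * h)) ^ 2))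
    = Gfun (r * s * Real.sinh (s * h) / Real.cosh (s * h)) / (2 * s ^ 2) := by
  have hC : (0:ℝ) < Real.cosh (s * h) := Real.cosh_pos _
  set C : ℝ := Real.cosh (s * h) with hCdef
  have hq : ∀ z : ℝ, HasDerivAt (fun z : ℝ => r * s * Real.sinh (s * z) / C)
      (r * s ^ 2 * Real.cosh (s * z) / C) z := by
    intro z
    have h1 : HasDerivAt (fun z : ℝ => s * z) s z := by
      simpa using (hasDerivAt_id z).const_mul s
    have h2 : HasDerivAt (fun z : ℝ => Real.sinh (s * z)) (Real.cosh (s * z) * s) z :=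
      (Real.hasDerivAt_sinh (s * z)).comp z h1
    have h3 := (h2.const_mul (r * s)).div_const C
    refine HasDerivAt.congr_deriv h3 ?_
    ring
  have hF : ∀ z : ℝ, HasDerivAt (fun z : ℝ => Gfun (r * s * Real.sinh (s * z) / C) / (2 * s ^ 2))
      ((r * Real.cosh (s * z) / C) *
        Real.sqrt (1 + (r * s * Real.sinh (s * z) / C) ^ 2)) z := by
    intro z
    have h1 := ((hasDerivAt_G (r * s * Real.sinh (s * z) / C)).comp z (hq z)).div_const
      (2 * s ^ 2)
    refine HasDerivAt.congr_deriv h1 ?_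
    field_simp
  have hcont : Continuous (fun z : ℝ => (r * Real.cosh (s * z) / C) *
      Real.sqrt (1 + (r * s * Real.sinh (s * z) / C) ^ 2)) := by
    apply Continuous.mul
    · exact ((continuous_const.mul (Real.continuous_cosh.comp
        (continuous_const.mul continuous_id))).div_const C)
    · apply Real.continuous_sqrt.comp
      apply Continuous.add continuous_const
      exact (((continuous_const.mul (Real.continuous_sinh.comp
        (continuous_const.mul continuous_id))).div_const C).pow 2)
  have hint := intervalIntegral.integral_eq_sub_of_hasDerivAt
    (fun z _ => hF z) (hcont.intervalIntegrable 0 h)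
  rw [hint]
  simp [Gfun, Real.arsinh_zero]

private lemma hasDerivAt_Abar (r h s : ℝ) (hs : s ≠ 0) :
    HasDerivAt (fun u : ℝ => 2 * Real.pi * Gfun (r * u * Real.sinh (u * h) / Real.cosh (u * h)) / u ^ 2)
      (4 * Real.pi / s ^ 3 *
        (r * (h * s ^ 2 / Real.cosh (s * h) ^ 2) *
            Real.sqrt (1 + (r * s * Real.sinh (s * h) / Real.cosh (s * h)) ^ 2)
          - Real.arsinh (r * s * Real.sinh (s * h) / Real.cosh (s * h)))) s := by
  have hC : (0:ℝ) < Real.cosh (s * h) := Real.cosh_pos _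
  have hP : HasDerivAt (fun u : ℝ => r * u * Real.sinh (u * h) / Real.cosh (u * h))
      (r * (Real.sinh (s * h) * Real.cosh (s * h) + s * h) / Real.cosh (s * h) ^ 2) s := by
    have h1 : ∀ u : ℝ, HasDerivAt (fun u : ℝ => u * h) h u := by
      intro u; simpa using (hasDerivAt_id u).mul_const h
    have h2 : HasDerivAt (fun u : ℝ => Real.sinh (u * h)) (Real.cosh (s * h) * h) s :=
      by exact (Real.hasDerivAt_sinh (s * h)).comp s (h1 s)
    have h3 : HasDerivAt (fun u : ℝ => Real.cosh (u * h)) (Real.sinh (s * h) * h) s :=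
      by exact (Real.hasDerivAt_cosh (s * h)).comp s (h1 s)
    have h4 : HasDerivAt (fun u : ℝ => r * u * Real.sinh (u * h))
        (r * Real.sinh (s * h) + r * s * (Real.cosh (s * h) * h)) s := by
      have := ((hasDerivAt_id s).const_mul r).mul h2
      refine HasDerivAt.congr_deriv this ?_
      simp
    have h5 := h4.div h3 (ne_of_gt hC)
    refine HasDerivAt.congr_deriv h5 ?_
    have hcs : Real.cosh (s * h) ^ 2 - Real.sinh (s * h) ^ 2 = 1 := Real.cosh_sq_sub_sinh_sq _
    rw [div_eq_div_iff (by positivity) (by positivity)]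
    linear_combination (r * s * h * Real.cosh (s*h) ^ 2) * hcs
  have hnum : HasDerivAt (fun u : ℝ => 2 * Real.pi * Gfun (r * u * Real.sinh (u * h) / Real.cosh (u * h)))
      (2 * Real.pi * (2 * Real.sqrt (1 + (r * s * Real.sinh (s * h) / Real.cosh (s * h)) ^ 2) *
        (r * (Real.sinh (s * h) * Real.cosh (s * h) + s * h) / Real.cosh (s * h) ^ 2))) s := by
    have := ((hasDerivAt_G (r * s * Real.sinh (s * h) / Real.cosh (s * h))).comp s hP).const_mul
      (2 * Real.pi)
    exact this
  have hden : HasDerivAt (fun u : ℝ => u ^ 2) (2 * s) s := by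
    simpa using hasDerivAt_pow 2 s
  have h6 := hnum.div hden (by positivity : s ^ 2 ≠ 0)
  refine HasDerivAt.congr_deriv h6 ?_
  rw [Gfun]
  have hcs : Real.cosh (s * h) ^ 2 - Real.sinh (s * h) ^ 2 = 1 := Real.cosh_sq_sub_sinh_sq _
  set S := Real.sinh (s * h)
  set C := Real.cosh (s * h)
  set Q := Real.sqrt (1 + (r * s * S / C) ^ 2)
  set R := Real.arsinh (r * s * S / C)
  have hss : s ^ 2 ≠ 0 := pow_ne_zero 2 hs
  field_simp
  ring_nf


private lemma sinh_le_mul_cosh (x : ℝ) (hx : 0 ≤ x) : Real.sinh x ≤ x * Real.cosh x := by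
  have key : MonotoneOn (fun y : ℝ => y * Real.cosh y - Real.sinh y) (Ici 0) := by
    have hd : ∀ y : ℝ, HasDerivAt (fun y : ℝ => y * Real.cosh y - Real.sinh y)
        (y * Real.sinh y) y := by
      intro y
      have := ((hasDerivAt_id y).mul (Real.hasDerivAt_cosh y)).sub (Real.hasDerivAt_sinh y)
      refine HasDerivAt.congr_deriv this ?_
      simp
    apply monotoneOn_of_deriv_nonneg (convex_Ici 0)
    · exact fun y _ => (hd y).continuousAt.continuousWithinAt
    · exact fun y _ => (hd y).differentiableAt.differentiableWithinAt
    · intro y hy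
      rw [interior_Ici, mem_Ioi] at hy
      rw [(hd y).deriv]
      have : 0 ≤ Real.sinh y := by
        rw [← Real.sinh_zero]
        exact Real.sinh_le_sinh.mpr hy.le
      positivity
  have := key self_mem_Ici (mem_Ici.mpr hx) hx
  simp only [Real.cosh_zero, Real.sinh_zero, mul_one, zero_mul, sub_zero, zero_sub, neg_zero] at this
  linarith

private lemma cosh_le_quad (t : ℝ) (h0 : 0 ≤ t) (h1 : t ≤ 1) :
    Real.cosh t ≤ 1 + 3 / 4 * t ^ 2 := by
  have hc2 : Real.cosh t = 2 * Real.cosh (t / 2) ^ 2 - 1 := by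
    have := Real.cosh_two_mul (t / 2)
    have hsq : Real.cosh (t/2) ^ 2 - Real.sinh (t/2) ^ 2 = 1 := Real.cosh_sq_sub_sinh_sq _
    rw [show 2 * (t/2) = t by ring] at this
    linarith
  have hs2 : Real.cosh t - 1 = 2 * Real.sinh (t / 2) ^ 2 := by
    have hsq : Real.cosh (t/2) ^ 2 - Real.sinh (t/2) ^ 2 = 1 := Real.cosh_sq_sub_sinh_sq _
    linarith
  have hsle : Real.sinh (t / 2) ≤ (t / 2) * Real.cosh (t / 2) :=
    sinh_le_mul_cosh _ (by linarith)
  have hsnn : 0 ≤ Real.sinh (t / 2) := by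
    rw [← Real.sinh_zero]
    exact Real.sinh_le_sinh.mpr (by linarith)
  have hkey : Real.cosh t - 1 ≤ t ^ 2 * (Real.cosh t + 1) / 4 := by
    rw [hs2]
    have h3 : Real.sinh (t/2) ^ 2 ≤ (t/2) ^ 2 * Real.cosh (t/2) ^ 2 := by
      have := mul_le_mul hsle hsle hsnn (by positivity)
      nlinarith [this]
    nlinarith [h3, hc2]
  have hone : 1 ≤ Real.cosh t := Real.one_le_cosh t
  have hX4 : Real.cosh t * (4 - t ^ 2) ≤ 4 + t ^ 2 := by nlinarith [hkey]
  have h4t : (0:ℝ) < 4 - t ^ 2 := by nlinarith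
  have ht4 : t ^ 4 ≤ t ^ 2 := by
    have h2 : t ^ 2 ≤ 1 := by nlinarith
    nlinarith [sq_nonneg t, h2]
  nlinarith [hX4, h4t, ht4, mul_pos h4t h4t]

private lemma sinh_le_cubic (t : ℝ) (h0 : 0 ≤ t) (h1 : t ≤ 1) :
    Real.sinh t ≤ t + t ^ 3 / 4 := by
  have key : MonotoneOn (fun y : ℝ => y + y ^ 3 / 4 - Real.sinh y) (Icc 0 1) := by
    have hd : ∀ y : ℝ, HasDerivAt (fun y : ℝ => y + y ^ 3 / 4 - Real.sinh y)
        (1 + 3 / 4 * y ^ 2 - Real.cosh y) y := by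
      intro y
      have := ((hasDerivAt_id y).add ((hasDerivAt_pow 3 y).div_const 4)).sub
        (Real.hasDerivAt_sinh y)
      refine HasDerivAt.congr_deriv this ?_
      simp
      ring
    apply monotoneOn_of_deriv_nonneg (convex_Icc 0 1)
    · exact fun y _ => (hd y).continuousAt.continuousWithinAt
    · exact fun y _ => (hd y).differentiableAt.differentiableWithinAt
    · intro y hy
      rw [interior_Icc] at hy
      rw [(hd y).deriv]
      have := cosh_le_quad y hy.1.le hy.2.le
      linarith
  have := key (left_mem_Icc.mpr zero_le_one) (mem_Icc.mpr ⟨h0, h1⟩) h0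
  simp only [Real.sinh_zero] at this
  linarith

private lemma self_le_sinh' (x : ℝ) (hx : 0 ≤ x) : x ≤ Real.sinh x := by
  rcases eq_or_lt_of_le hx with h | h
  · simp [← h]
  · exact (Real.self_lt_sinh_iff.mpr h).le

private lemma cube_bound (t : ℝ) (h0 : 0 ≤ t) : t ^ 3 / 3 ≤ t * Real.cosh t - Real.sinh t := by
  have key : MonotoneOn (fun y : ℝ => y * Real.cosh y - Real.sinh y - y ^ 3 / 3) (Ici 0) := by
    have hd : ∀ y : ℝ, HasDerivAt (fun y : ℝ => y * Real.cosh y - Real.sinh y - y ^ 3 / 3)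
        (y * Real.sinh y - y ^ 2) y := by
      intro y
      have := (((hasDerivAt_id y).mul (Real.hasDerivAt_cosh y)).sub
        (Real.hasDerivAt_sinh y)).sub ((hasDerivAt_pow 3 y).div_const 3)
      refine HasDerivAt.congr_deriv this ?_
      simp
    apply monotoneOn_of_deriv_nonneg (convex_Ici 0)
    · exact fun y _ => (hd y).continuousAt.continuousWithinAt
    · exact fun y _ => (hd y).differentiableAt.differentiableWithinAt
    · intro y hy
      rw [interior_Ici, mem_Ioi] at hy
      rw [(hd y).deriv]
      have := self_le_sinh' y hy.le
      nlinarith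
  have := key self_mem_Ici (mem_Ici.mpr h0) h0
  simp only [Real.cosh_zero, Real.sinh_zero] at this
  nlinarith [this]

private lemma cosh_convex (x y l m : ℝ) (hl : 0 ≤ l) (hm : 0 ≤ m) (hlm : l + m = 1) :
    Real.cosh (l * x + m * y) ≤ l * Real.cosh x + m * Real.cosh y := by
  have e1 := convexOn_exp.2 (mem_univ x) (mem_univ y) hl hm hlm
  have e2 := convexOn_exp.2 (mem_univ (-x)) (mem_univ (-y)) hl hm hlm
  simp only [smul_eq_mul] at e1 e2
  rw [Real.cosh_eq, Real.cosh_eq, Real.cosh_eq]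
  rw [show -(l * x + m * y) = l * (-x) + m * (-y) by ring]
  linarith

private lemma sinh_one_lt_two : Real.sinh 1 < 2 := by
  rw [Real.sinh_eq]
  have h1 := Real.exp_one_lt_d9
  have h2 : 0 < Real.exp (-1) := Real.exp_pos _
  norm_num at h1 ⊢
  linarith

private lemma tanh_one_lt : Real.sinh 1 < 0.77 * Real.cosh 1 := by
  rw [Real.sinh_eq, Real.cosh_eq]
  have h1 := Real.exp_one_lt_d9
  have h2 : Real.exp (-1) = (Real.exp 1)⁻¹ := by rw [Real.exp_neg]
  have h3 : Real.exp 1 * Real.exp (-1) = 1 := by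
    rw [← Real.exp_add]; norm_num
  have h4 : 0 < Real.exp (-1) := Real.exp_pos _
  have h5 : 0 < Real.exp 1 := Real.exp_pos _
  nlinarith [h1, h3, h4]

private lemma Esign (r h : ℝ) (hr : 0 < r) (hh : 0 < h) (u : ℝ) (hu : 0 < u) :
    (r * u ≤ Real.cosh (u * h) →
      r * (h * u ^ 2 / Real.cosh (u * h) ^ 2) *
          Real.sqrt (1 + (r * u * Real.sinh (u * h) / Real.cosh (u * h)) ^ 2)
        ≤ Real.arsinh (r * u * Real.sinh (u * h) / Real.cosh (u * h))) ∧
    (Real.cosh (u * h) ≤ r * u →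
      Real.arsinh (r * u * Real.sinh (u * h) / Real.cosh (u * h))
        ≤ r * (h * u ^ 2 / Real.cosh (u * h) ^ 2) *
          Real.sqrt (1 + (r * u * Real.sinh (u * h) / Real.cosh (u * h)) ^ 2)) := by
  have hC : (0:ℝ) < Real.cosh (u * h) := Real.cosh_pos _
  have hS : (0:ℝ) < Real.sinh (u * h) := by
    rw [← Real.sinh_zero]
    exact Real.sinh_lt_sinh.mpr (by positivity)
  have huh : u * h < Real.sinh (u * h) := Real.self_lt_sinh_iff.mpr (by positivity)
  have hC1 : (1:ℝ) ≤ Real.cosh (u * h) := Real.one_le_cosh _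
  set C := Real.cosh (u * h) with hCdef
  set S := Real.sinh (u * h) with hSdef
  set a : ℝ := h * u ^ 2 / C ^ 2 with hadef
  set b : ℝ := u * S / C with hbdef
  set c : ℝ := C / u with hcdef
  have ha : 0 < a := by positivity
  have hb : 0 < b := by positivity
  have hc : 0 < c := by positivity
  have hab : a < b := by
    rw [hadef, hbdef, div_lt_div_iff₀ (by positivity) (by positivity)]
    nlinarith [mul_pos (mul_pos hu hC) (sub_pos.mpr huh),
      mul_nonneg (mul_nonneg (mul_pos hu hS).le hC.le) (sub_nonneg.mpr hC1)]
  have hbc : b * c = S := by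
    rw [hbdef, hcdef]
    field_simp
    try ring
  have hsqrtS : Real.sqrt (1 + S ^ 2) = C := by
    rw [show 1 + S ^ 2 = C ^ 2 by nlinarith [Real.cosh_sq_sub_sinh_sq (u * h)]]
    exact Real.sqrt_sq hC.le
  have hzero : a * c * Real.sqrt (1 + (b * c) ^ 2) = Real.arsinh (b * c) := by
    rw [hbc, hsqrtS, Real.arsinh_sinh, hadef, hcdef]
    field_simp
    try ring
  have hphi := phi_sign a b c ha hb hab hc hzero r hr
  have hbr : b * r = r * u * S / C := by rw [hbdef]; ring
  rw [hbr] at hphi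
  obtain ⟨h1, h2⟩ := hphi
  constructor
  · intro hle
    have := h1 ((le_div_iff₀ hu).mpr (by linarith [hle] : r * u ≤ C))
    rw [mul_comm r a]
    exact this
  · intro hge
    have := h2 ((div_le_iff₀ hu).mpr (by linarith [hge] : C ≤ r * u))
    rw [mul_comm r a]
    exact this

private lemma concave_D (r h x y u : ℝ) (hxy : x < y) (hxu : x ≤ u) (huy : u ≤ y) :
    ((y - u) / (y - x)) * (r * x - Real.cosh (x * h)) +
      ((u - x) / (y - x)) * (r * y - Real.cosh (y * h))
    ≤ r * u - Real.cosh (u * h) := by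
  have hyx : (0:ℝ) < y - x := by linarith
  set l : ℝ := (y - u) / (y - x) with hldef
  set m : ℝ := (u - x) / (y - x) with hmdef
  have hl : 0 ≤ l := by
    apply div_nonneg (by linarith) hyx.le
  have hm : 0 ≤ m := by
    apply div_nonneg (by linarith) hyx.le
  have hlm : l + m = 1 := by
    rw [hldef, hmdef]
    field_simp
    ring
  have hu' : l * x + m * y = u := by
    rw [hldef, hmdef]
    field_simp
    try ring
  have hconv := cosh_convex (x * h) (y * h) l m hl hm hlm
  have harg : l * (x * h) + m * (y * h) = u * h := by
    rw [← hu']; ring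
  rw [harg] at hconv
  have hru : r * u = l * (r * x) + m * (r * y) := by
    rw [← hu']; ring
  nlinarith [hconv, hru]

private lemma hSr_lemma (r h s₂ S : ℝ) (hr : 0 < r) (hh : 0 < h) (hs₂ : 0 < s₂)
    (hS : 0 ≤ S) (hSsq : S ^ 2 = (r * s₂) ^ 2 - 1)
    (hr259 : 2.59 * h < r) (hs2h : 1 < s₂ * h) :
    2 * (s₂ * h) * r - h ≤ S * r := by
  have hr2 : 6.7 * h ^ 2 ≤ r ^ 2 := by nlinarith [sq_nonneg (r - 2.59 * h)]
  have hst : 1 ≤ (s₂ * h) ^ 2 := by nlinarith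
  rcases le_or_gt (2 * (s₂ * h) * r - h) 0 with hq | hq
  · nlinarith [mul_nonneg hS hr.le]
  · have e1 : 2.7 * h ^ 2 * (r ^ 2 * s₂ ^ 2) ≤ (r ^ 2 - 4 * h ^ 2) * (r ^ 2 * s₂ ^ 2) := by
      apply mul_le_mul_of_nonneg_right _ (by positivity)
      linarith
    have hSr2 : (S * r) ^ 2 = ((r * s₂) ^ 2 - 1) * r ^ 2 := by
      rw [mul_pow, hSsq]
    have e3 := mul_le_mul_of_nonneg_left hst (by positivity : (0:ℝ) ≤ 2.7 * r ^ 2)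
    have e4 : (0:ℝ) ≤ 4 * s₂ * h ^ 2 * r := by positivity
    have hsq' : (2 * (s₂ * h) * r - h) ^ 2 ≤ (S * r) ^ 2 := by
      nlinarith [e1, e3, e4, hr2, hSr2]
    nlinarith [hsq', hq, mul_nonneg hS hr.le]

set_option maxHeartbeats 1600000 in
/-- **Maximality of the unstable catenoid.**
Let `r, h > 0` with `2h < r tanh 1`, `A(s)` the area of the catenoidal slice `C_s^{r,h}`,
and let `s₂ > 0` be the larger solution of `r s = cosh (s h)` (the unstable catenoid).
Then `A(s) ≤ A(s₂)` for all `s ≥ 0`: the unstable catenoid has largest area in the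
family `{C_s^{r,h}}_{s ≥ 0}`. -/
theorem unstable_catenoid_is_maximal
    (r h : ℝ) (hr : 0 < r) (hh : 0 < h) (hrh : 2 * h < r * Real.tanh 1)
    (A : ℝ → ℝ)
    (hA : ∀ s : ℝ, A s = 4 * Real.pi * ∫ z in (0:ℝ)..h,
        (r * Real.cosh (s * z) / Real.cosh (s * h)) *
          Real.sqrt (1 + (r * s * Real.sinh (s * z) / Real.cosh (s * h)) ^ 2))
    (s₂ : ℝ) (hs₂ : 0 < s₂) (heq : r * s₂ = Real.cosh (s₂ * h))
    (hlargest : ∀ s : ℝ, 0 < s → r * s = Real.cosh (s * h) → s ≤ s₂) :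
    ∀ s : ℝ, 0 ≤ s → A s ≤ A s₂ := by
  have hπ : (0:ℝ) < Real.pi := Real.pi_pos
  set Abar : ℝ → ℝ := fun u =>
    2 * Real.pi * Gfun (r * u * Real.sinh (u * h) / Real.cosh (u * h)) / u ^ 2 with hAbardef
  have hAbar_eval : ∀ u : ℝ,
      Abar u = 2 * Real.pi * Gfun (r * u * Real.sinh (u * h) / Real.cosh (u * h)) / u ^ 2 :=
    fun u => rfl
  have hAeq : ∀ s : ℝ, s ≠ 0 → A s = Abar s := by
    intro s hs
    rw [hA s, closed_form r h s hs, hAbar_eval s]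
    field_simp
    ring
  have hA0 : A 0 = 4 * Real.pi * (r * h) := by
    rw [hA 0]
    have hι : (∫ z in (0:ℝ)..h,
          (r * Real.cosh (0 * z) / Real.cosh (0 * h)) *
            Real.sqrt (1 + (r * 0 * Real.sinh (0 * z) / Real.cosh (0 * h)) ^ 2))
        = ∫ _ in (0:ℝ)..h, r := by
      apply intervalIntegral.integral_congr
      intro z _
      simp
    rw [hι, intervalIntegral.integral_const, smul_eq_mul]
    ring
  have hderiv : ∀ u : ℝ, u ≠ 0 → HasDerivAt Abar (4 * Real.pi / u ^ 3 *
      (r * (h * u ^ 2 / Real.cosh (u * h) ^ 2) *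
          Real.sqrt (1 + (r * u * Real.sinh (u * h) / Real.cosh (u * h)) ^ 2)
        - Real.arsinh (r * u * Real.sinh (u * h) / Real.cosh (u * h)))) u := by
    intro u hu
    rw [hAbardef]
    exact hasDerivAt_Abar r h u hu
  -- lower bound for cosh
  have hcoshq : ∀ x : ℝ, 0 ≤ x → x ^ 2 / 8 ≤ Real.cosh x := by
    intro x hx
    have h1 : x / 2 + 1 ≤ Real.exp (x / 2) := Real.add_one_le_exp _
    have h2 : (x / 2 + 1) ^ 2 ≤ Real.exp (x / 2) ^ 2 :=
      pow_le_pow_left₀ (by positivity) h1 2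
    have h3 : Real.exp (x / 2) ^ 2 = Real.exp x := by
      rw [sq, ← Real.exp_add]
      norm_num
    have h4 : 0 < Real.exp (-x) := Real.exp_pos _
    rw [Real.cosh_eq]
    nlinarith [h2, h3, h4, hx]
  -- no root strictly above s₂
  have hroot_above : ∀ u : ℝ, 0 < u → 0 ≤ r * u - Real.cosh (u * h) → u ≤ s₂ := by
    intro u hu hDu
    obtain ⟨M, huM, hDM⟩ : ∃ M : ℝ, u < M ∧ r * M - Real.cosh (M * h) < 0 := by
      refine ⟨u + 8 * r / h ^ 2 + 1, ?_, ?_⟩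
      · have : (0:ℝ) < 8 * r / h ^ 2 := by positivity
        linarith
      · set M : ℝ := u + 8 * r / h ^ 2 + 1 with hMdef
        have huM : u < M := by
          have : (0:ℝ) < 8 * r / h ^ 2 := by positivity
          rw [hMdef]; linarith
        have hMpos : 0 < M := hu.trans huM
        have h1 := hcoshq (M * h) (by positivity)
        have h2 : 8 * r / h ^ 2 < M := by rw [hMdef]; linarith
        have h3 : 8 * r < M * h ^ 2 := (div_lt_iff₀ (by positivity)).mp h2
        clear_value M
        nlinarith [h1, h3, hMpos, mul_lt_mul_of_pos_left h3 hMpos]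
    have hMpos : 0 < M := hu.trans huM
    have hcont : ContinuousOn (fun v : ℝ => r * v - Real.cosh (v * h)) (Icc u M) :=
      ((continuous_const.mul continuous_id).sub
        (Real.continuous_cosh.comp (continuous_id.mul continuous_const))).continuousOn
    have hIVT := intermediate_value_Icc' huM.le hcont
    have h0mem : (0:ℝ) ∈ Icc (r * M - Real.cosh (M * h)) (r * u - Real.cosh (u * h)) :=
      ⟨hDM.le, hDu⟩
    obtain ⟨v, hvmem, hv⟩ := hIVT h0mem
    have hvpos : 0 < v := lt_of_lt_of_le hu hvmem.1
    have hveq : r * v = Real.cosh (v * h) := by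
      have : r * v - Real.cosh (v * h) = 0 := hv
      linarith
    exact le_trans hvmem.1 (hlargest v hvpos hveq)
  have hD_above : ∀ u : ℝ, s₂ < u → r * u < Real.cosh (u * h) := by
    intro u hu
    by_contra hcon
    push_neg at hcon
    exact absurd (hroot_above u (hs₂.trans hu) (by linarith)) (not_le.mpr hu)
  -- numeric consequences of hrh
  have hc1 : (0:ℝ) < Real.cosh 1 := Real.cosh_pos _
  have h2hc : 2 * h * Real.cosh 1 < r * Real.sinh 1 := by
    rw [Real.tanh_eq_sinh_div_cosh] at hrh
    rw [← mul_div_assoc] at hrh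
    exact (lt_div_iff₀ hc1).mp hrh
  have hcosh1r : h * Real.cosh 1 < r := by
    nlinarith [h2hc, sinh_one_lt_two, hr, hc1]
  have hr259 : 2.59 * h < r := by
    nlinarith [h2hc, mul_lt_mul_of_pos_left tanh_one_lt hr, hc1, hh]
  have hD1 : 0 < r * (1 / h) - Real.cosh (1 / h * h) := by
    rw [show 1 / h * h = 1 by field_simp]
    have h1 : Real.cosh 1 < r / h := by rw [lt_div_iff₀ hh]; nlinarith [hcosh1r]
    have h2 : r * (1 / h) = r / h := by ring
    linarith [h1, h2.ge]
  have h1hs2 : 1 / h < s₂ := by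
    have hle : 1 / h ≤ s₂ := hroot_above (1 / h) (by positivity) hD1.le
    rcases eq_or_lt_of_le hle with heq' | hlt
    · exfalso
      rw [heq'] at hD1
      rw [show s₂ * h = s₂ * h by rfl] at heq
      nlinarith [hD1, heq]
    · exact hlt
  have hs2h : 1 < s₂ * h := by
    have := (div_lt_iff₀ hh).mp h1hs2
    linarith
  -- the key bound 4πrh ≤ Abar s₂
  have hS2nn : (0:ℝ) ≤ Real.sinh (s₂ * h) := by
    rw [← Real.sinh_zero]
    exact Real.sinh_le_sinh.mpr (by positivity)
  have hSsq : Real.sinh (s₂ * h) ^ 2 = (r * s₂) ^ 2 - 1 := by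
    have h1 := Real.cosh_sq_sub_sinh_sq (s₂ * h)
    have h2 : Real.cosh (s₂ * h) ^ 2 = (r * s₂) ^ 2 := by rw [heq]
    linarith
  have hSr : 2 * (s₂ * h) * r - h ≤ Real.sinh (s₂ * h) * r :=
    hSr_lemma r h s₂ _ hr hh hs₂ hS2nn hSsq hr259 hs2h
  have hmain : 2 * (r * s₂) * (s₂ * h) ≤ Real.sinh (s₂ * h) * (r * s₂) + s₂ * h := by
    nlinarith [mul_le_mul_of_nonneg_left hSr hs₂.le]
  have hsq2 : Real.sqrt (1 + Real.sinh (s₂ * h) ^ 2) = Real.cosh (s₂ * h) := by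
    rw [show 1 + Real.sinh (s₂ * h) ^ 2 = Real.cosh (s₂ * h) ^ 2 by
      nlinarith [Real.cosh_sq_sub_sinh_sq (s₂ * h)]]
    exact Real.sqrt_sq (Real.cosh_pos _).le
  have hP2 : r * s₂ * Real.sinh (s₂ * h) / Real.cosh (s₂ * h) = Real.sinh (s₂ * h) := by
    rw [← heq]
    field_simp
  have key0 : 4 * Real.pi * (r * h) ≤ Abar s₂ := by
    rw [hAbar_eval s₂, hP2]
    have hGval : Gfun (Real.sinh (s₂ * h)) =
        Real.sinh (s₂ * h) * Real.cosh (s₂ * h) + s₂ * h := by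
      rw [Gfun, hsq2, Real.arsinh_sinh]
    rw [hGval, ← heq]
    rw [le_div_iff₀ (by positivity : (0:ℝ) < s₂ ^ 2)]
    nlinarith [mul_le_mul_of_nonneg_left hmain (le_of_lt (by positivity : (0:ℝ) < 2 * Real.pi))]
  -- antitone above s₂
  have hAnti : AntitoneOn Abar (Ici s₂) := by
    apply antitoneOn_of_deriv_nonpos (convex_Ici s₂)
    · exact fun u hu =>
        (hderiv u (ne_of_gt (lt_of_lt_of_le hs₂ hu))).continuousAt.continuousWithinAt
    · intro u hu
      rw [interior_Ici, mem_Ioi] at hu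
      exact (hderiv u (ne_of_gt (hs₂.trans hu))).differentiableAt.differentiableWithinAt
    · intro u hu
      rw [interior_Ici, mem_Ioi] at hu
      have hu0 : 0 < u := hs₂.trans hu
      rw [(hderiv u (ne_of_gt hu0)).deriv]
      have hE := (Esign r h hr hh u hu0).1 (hD_above u hu).le
      exact mul_nonpos_of_nonneg_of_nonpos (by positivity) (by linarith [hE])
  -- main case split
  intro s hs0
  rcases eq_or_lt_of_le hs0 with h0 | hspos
  · rw [← h0, hA0, hAeq s₂ (ne_of_gt hs₂)]
    exact key0
  · have hsne : s ≠ 0 := ne_of_gt hspos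
    rcases le_or_gt s s₂ with hle | hgt
    · by_cases hall : ∀ u ∈ Icc s s₂, Real.cosh (u * h) ≤ r * u
      · have hmono : MonotoneOn Abar (Icc s s₂) := by
          apply monotoneOn_of_deriv_nonneg (convex_Icc s s₂)
          · exact fun u hu =>
              (hderiv u (ne_of_gt (lt_of_lt_of_le hspos hu.1))).continuousAt.continuousWithinAt
          · intro u hu
            rw [interior_Icc] at hu
            exact (hderiv u (ne_of_gt (hspos.trans hu.1))).differentiableAt.differentiableWithinAt
          · intro u hu
            rw [interior_Icc] at hu
            have hu0 : 0 < u := hspos.trans hu.1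
            rw [(hderiv u (ne_of_gt hu0)).deriv]
            have hE := (Esign r h hr hh u hu0).2 (hall u ⟨hu.1.le, hu.2.le⟩)
            exact mul_nonneg (by positivity) (by linarith [hE])
        rw [hAeq s hsne, hAeq s₂ (ne_of_gt hs₂)]
        exact hmono (left_mem_Icc.mpr hle) (right_mem_Icc.mpr hle) hle
      · push_neg at hall
        obtain ⟨u, humem, hDu⟩ := hall
        have hDs2zero : r * s₂ - Real.cosh (s₂ * h) = 0 := by rw [heq]; ring
        have hDs : r * s - Real.cosh (s * h) < 0 := by
          rcases eq_or_lt_of_le humem.1 with hsu | hsu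
          · rw [← hsu] at hDu
            linarith
          · by_contra hcon
            push_neg at hcon
            have hsu2 : s < s₂ := lt_of_lt_of_le hsu humem.2
            have hcc := concave_D r h s s₂ u hsu2 humem.1 humem.2
            rw [hDs2zero, mul_zero, add_zero] at hcc
            have hl : 0 ≤ (s₂ - u) / (s₂ - s) :=
              div_nonneg (by linarith [humem.2]) (by linarith)
            nlinarith [hcc, mul_nonneg hl hcon, hDu]
        have hs1h : s * h < 1 := by
          by_contra hcon
          push_neg at hcon
          have h1hs : 1 / h ≤ s := by rw [div_le_iff₀ hh]; linarith
          have hcc := concave_D r h (1 / h) s₂ s h1hs2 h1hs hle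
          rw [hDs2zero, mul_zero, add_zero] at hcc
          have hl : 0 ≤ (s₂ - s) / (s₂ - 1 / h) :=
            div_nonneg (by linarith) (by linarith [h1hs2])
          nlinarith [hcc, mul_nonneg hl hD1.le, hDs]
        -- pointwise bound A s ≤ 4πrh
        have hCpos : 0 < Real.cosh (s * h) := Real.cosh_pos _
        have hS0 : (0:ℝ) ≤ Real.sinh (s * h) := by
          rw [← Real.sinh_zero]
          exact Real.sinh_le_sinh.mpr (by positivity)
        have hqpos : 0 < r * s := by positivity
        have hS54 : Real.sinh (s * h) ≤ 5 / 4 * (s * h) := by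
          have h1 := sinh_le_cubic (s * h) (by positivity) hs1h.le
          have ht : 0 < s * h := mul_pos hspos hh
          have ht2 : (s * h) ^ 2 < 1 := by nlinarith [ht, hs1h]
          have ht3 : (s * h) ^ 3 ≤ s * h := by nlinarith [ht, ht2]
          linarith [h1, ht3]
        have hS3 : Real.sinh (s * h) ^ 3 ≤ 2 * (s * h) ^ 3 := by
          have h1 : Real.sinh (s * h) ^ 3 ≤ (5 / 4 * (s * h)) ^ 3 :=
            pow_le_pow_left₀ hS0 hS54 3
          nlinarith [h1, pow_pos (mul_pos hspos hh) 3]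
        have hkey2 : 6 * Real.sinh (s * h) + Real.sinh (s * h) ^ 3
            ≤ 6 * (s * h) * Real.cosh (s * h) := by
          have h1 := cube_bound (s * h) (by positivity)
          nlinarith [h1, hS3]
        have hpoly : 6 * (r * s) * Real.sinh (s * h) * Real.cosh (s * h) ^ 2
            + (r * s) ^ 3 * Real.sinh (s * h) ^ 3
            ≤ 6 * (r * s) * (s * h) * Real.cosh (s * h) ^ 3 := by
          have e1 : (r * s) * Real.cosh (s * h) ^ 2 *
              (6 * Real.sinh (s * h) + Real.sinh (s * h) ^ 3)
              ≤ (r * s) * Real.cosh (s * h) ^ 2 * (6 * (s * h) * Real.cosh (s * h)) :=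
            mul_le_mul_of_nonneg_left hkey2 (by positivity)
          have e2 : (r * s) ^ 2 * ((r * s) * Real.sinh (s * h) ^ 3)
              ≤ Real.cosh (s * h) ^ 2 * ((r * s) * Real.sinh (s * h) ^ 3) := by
            apply mul_le_mul_of_nonneg_right _ (by positivity)
            nlinarith [hDs, hqpos]
          nlinarith [e1, e2]
        have hPnn : (0:ℝ) ≤ r * s * Real.sinh (s * h) / Real.cosh (s * h) := by positivity
        have hGP : Gfun (r * s * Real.sinh (s * h) / Real.cosh (s * h)) ≤ 2 * r * h * s ^ 2 := by
          have h1 := G_le _ hPnn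
          have h3C : (0:ℝ) < 3 * Real.cosh (s * h) ^ 3 := by positivity
          have h2 : 2 * (r * s * Real.sinh (s * h) / Real.cosh (s * h))
              + (r * s * Real.sinh (s * h) / Real.cosh (s * h)) ^ 3 / 3
              ≤ 2 * r * h * s ^ 2 := by
            apply le_of_mul_le_mul_right _ h3C
            calc (2 * (r * s * Real.sinh (s * h) / Real.cosh (s * h))
                + (r * s * Real.sinh (s * h) / Real.cosh (s * h)) ^ 3 / 3)
                  * (3 * Real.cosh (s * h) ^ 3)
                = 6 * (r * s) * Real.sinh (s * h) * Real.cosh (s * h) ^ 2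
                  + (r * s) ^ 3 * Real.sinh (s * h) ^ 3 := by
                  field_simp
                  ring
              _ ≤ 6 * (r * s) * (s * h) * Real.cosh (s * h) ^ 3 := hpoly
              _ = (2 * r * h * s ^ 2) * (3 * Real.cosh (s * h) ^ 3) := by ring
          linarith [h1, h2]
        have hAs : A s ≤ 4 * Real.pi * (r * h) := by
          rw [hAeq s hsne, hAbar_eval s]
          rw [div_le_iff₀ (by positivity : (0:ℝ) < s ^ 2)]
          nlinarith [mul_le_mul_of_nonneg_left hGP
            (le_of_lt (by positivity : (0:ℝ) < 2 * Real.pi))]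
        have hfin := hAeq s₂ (ne_of_gt hs₂)
        linarith [hAs, key0, hfin.ge, hfin.le]
    · rw [hAeq s hsne, hAeq s₂ (ne_of_gt hs₂)]
      exact hAnti self_mem_Ici (mem_Ici.mpr hgt.le) hgt.le
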